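/- Let T be a bounded operator on a Hilbert space H with closed invariant subspace N, and write T in block form [[A, B], [0, D]] with respect to H = N ⊕ N⊥. If [T*, T] is compact and [A*, A] is compact, then BB* is compact, B*B is compact, and [D*, D] is compact. -/

import Mathlib

open ContinuousLinearMap

/-- If `‖g z‖² ≤ ‖f z‖ ‖z‖` for all `z` and `f` is compact, then `g` is compact. -/
lemma isCompactOperator_of_sq_le {H : Type*} [NormedAddCommGroup H]
    [InnerProductSpace ℂ H] [CompleteSpace H]
    (f g : H →L[ℂ] H) (hle : ∀ z : H, ‖g z‖ ^ 2 ≤ ‖f z‖ * ‖z‖)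
    (hf : IsCompactOperator ⇑f) : IsCompactOperator ⇑g := by
  classical
  have hK : IsCompact (closure (⇑f '' Metric.closedBall 0 1)) := by
    have h : IsCompactOperator ⇑(f : H →ₗ[ℂ] H) := hf
    have := h.isCompact_closure_image_closedBall (𝕜₁ := ℂ) 1
    simpa using this
  have hTBf : TotallyBounded (⇑f '' Metric.closedBall 0 1) :=
    TotallyBounded.subset subset_closure hK.totallyBounded
  have hTBg : TotallyBounded (⇑g '' Metric.closedBall 0 1) := by
    rw [Metric.totallyBounded_iff]
    intro ε hε
    obtain ⟨t, htf, hcov⟩ := Metric.totallyBounded_iff.mp hTBf (ε ^ 2 / 8) (by positivity)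
    refine ⟨(fun y => g (if h : ∃ x : H, ‖x‖ ≤ 1 ∧ dist (f x) y < ε ^ 2 / 8
      then h.choose else 0)) '' t, htf.image _, ?_⟩
    rintro _ ⟨x, hx, rfl⟩
    have hx1 : ‖x‖ ≤ 1 := by simpa [mem_closedBall_zero_iff] using hx
    have hmem : f x ∈ ⋃ y ∈ t, Metric.ball y (ε ^ 2 / 8) := hcov ⟨x, hx, rfl⟩
    simp only [Set.mem_iUnion] at hmem
    obtain ⟨y, hyt, hy⟩ := hmem
    have hyd : dist (f x) y < ε ^ 2 / 8 := by simpa [Metric.mem_ball] using hy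
    have hex : ∃ x' : H, ‖x'‖ ≤ 1 ∧ dist (f x') y < ε ^ 2 / 8 := ⟨x, hx1, hyd⟩
    obtain ⟨hx'1, hx'd⟩ := hex.choose_spec
    refine Set.mem_iUnion₂.mpr ⟨_, Set.mem_image_of_mem _ hyt, ?_⟩
    rw [dif_pos hex]
    have hΔ : ‖g x - g hex.choose‖ ^ 2 ≤ ‖f x - f hex.choose‖ * ‖x - hex.choose‖ := by
      have := hle (x - hex.choose)
      simpa [map_sub] using this
    have h1 : ‖f x - f hex.choose‖ ≤ ε ^ 2 / 4 := by
      have htri := dist_triangle (f x) y (f hex.choose)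
      rw [dist_comm y (f hex.choose)] at htri
      rw [show ‖f x - f hex.choose‖ = dist (f x) (f hex.choose) from (dist_eq_norm _ _).symm]
      linarith
    have h2 : ‖x - hex.choose‖ ≤ 2 := by
      calc ‖x - hex.choose‖ ≤ ‖x‖ + ‖hex.choose‖ := norm_sub_le _ _
        _ ≤ 2 := by linarith
    have h3 : ‖g x - g hex.choose‖ ^ 2 < ε ^ 2 := by
      have hf0 : (0:ℝ) ≤ ‖f x - f hex.choose‖ := norm_nonneg _
      have hxx0 : (0:ℝ) ≤ ‖x - hex.choose‖ := norm_nonneg _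
      nlinarith
    have h4 : ‖g x - g hex.choose‖ < ε :=
      lt_of_pow_lt_pow_left₀ 2 (le_of_lt hε) h3
    simpa [Metric.mem_ball, dist_eq_norm] using h4
  have hKg : IsCompact (closure (⇑g '' Metric.closedBall 0 1)) :=
    hTBg.closure.isCompact_of_isClosed isClosed_closure
  refine ⟨closure (⇑g '' Metric.closedBall 0 1), hKg, ?_⟩
  refine Filter.mem_of_superset (Metric.closedBall_mem_nhds 0 one_pos) ?_
  exact fun x hx => subset_closure ⟨x, hx, rfl⟩

/-- `‖B* z‖² ≤ ‖(B B*) z‖ ‖z‖`. -/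
lemma norm_star_apply_sq_le {H : Type*} [NormedAddCommGroup H]
    [InnerProductSpace ℂ H] [CompleteSpace H] (b : H →L[ℂ] H) (z : H) :
    ‖(star b) z‖ ^ 2 ≤ ‖(b * star b) z‖ * ‖z‖ := by
  rw [ContinuousLinearMap.star_eq_adjoint]
  have h1 : ‖(adjoint b) z‖ ^ 2
      = RCLike.re (inner (𝕜 := ℂ) ((adjoint b) z) ((adjoint b) z)) :=
    (inner_self_eq_norm_sq _).symm
  rw [h1, ContinuousLinearMap.adjoint_inner_left]
  have h2 : RCLike.re (inner (𝕜 := ℂ) z (b ((adjoint b) z)))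
      ≤ ‖inner (𝕜 := ℂ) z (b ((adjoint b) z))‖ := RCLike.re_le_norm _
  have h3 : ‖inner (𝕜 := ℂ) z (b ((adjoint b) z))‖ ≤ ‖z‖ * ‖b ((adjoint b) z)‖ :=
    norm_inner_le_norm _ _
  have h4 : b ((adjoint b) z) = (b * adjoint b) z := rfl
  rw [h4] at h3
  calc RCLike.re (inner (𝕜 := ℂ) z (b ((adjoint b) z)))
      ≤ ‖z‖ * ‖(b * adjoint b) z‖ := le_trans h2 h3
    _ = ‖(b * adjoint b) z‖ * ‖z‖ := mul_comm _ _

/-- if `[T*,T]` and `[A*,A]` are compact, then `BB*`, `B*B` and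
`[D*,D]` are compact, where `[[A,B],[0,D]]` is the block form of `T` relative
to `H = N ⊕ Nᗮ` (blocks realized as compressions via the projection `P` onto `N`). -/
theorem compact_blocks_of_compact_selfCommutator
    {H : Type*} [NormedAddCommGroup H] [InnerProductSpace ℂ H] [CompleteSpace H]
    (N : Submodule ℂ H) [CompleteSpace N]
    (P : H →L[ℂ] H) (hP : P = N.subtypeL ∘L N.orthogonalProjection)
    (T A B D : H →L[ℂ] H)
    (hA : A = P ∘L T ∘L P)
    (hB : B = P ∘L T ∘L (1 - P))
    (hD : D = (1 - P) ∘L T ∘L (1 - P))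
    (hinv : (1 - P) ∘L T ∘L P = 0)
    (hT : IsCompactOperator ⇑(adjoint T ∘L T - T ∘L adjoint T))
    (hAc : IsCompactOperator ⇑(adjoint A ∘L A - A ∘L adjoint A)) :
    IsCompactOperator ⇑(B ∘L adjoint B) ∧
    IsCompactOperator ⇑(adjoint B ∘L B) ∧
    IsCompactOperator ⇑(adjoint D ∘L D - D ∘L adjoint D) := by
  simp only [← ContinuousLinearMap.mul_def, ← ContinuousLinearMap.star_eq_adjoint]
    at hA hB hD hinv hT hAc ⊢
  subst hA hB hD
  have hsa : IsSelfAdjoint P := by rw [hP]; exact isSelfAdjoint_starProjection N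
  have hstar : star P = P := hsa
  have hPP : P * P = P := by
    rw [hP]; ext x
    simp [ContinuousLinearMap.mul_apply, Submodule.orthogonalProjection_mem_subspace_eq_self,
      Submodule.starProjection_eq_self_iff]
  have hG : P * P - P = 0 := sub_eq_zero_of_eq hPP
  have hE : T * P - P * T * P = 0 := by
    have h : (1 - P) * (T * P) = 0 := hinv
    rw [sub_mul, one_mul, ← mul_assoc] at h
    exact h
  have hF : P * star T - P * star T * P = 0 := by
    have h := congrArg star hinv
    rw [star_zero, star_mul, star_mul, star_sub, star_one, hstar] at h
    rw [mul_sub, mul_one] at h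
    exact h
  have hstB : star (P * (T * (1 - P))) = (1 - P) * star T * P := by
    rw [star_mul, star_mul, star_sub, star_one, hstar]
  have hstA : star (P * (T * P)) = P * star T * P := by
    rw [star_mul, star_mul, hstar]
  have hstD : star ((1 - P) * (T * (1 - P))) = (1 - P) * star T * (1 - P) := by
    rw [star_mul, star_mul, star_sub, star_one, hstar]
  -- key algebraic identity 1 :  B B* = [A*, A] - P [T*, T] P
  have key1 : P * (T * (1 - P)) * star (P * (T * (1 - P)))
      = star (P * (T * P)) * (P * (T * P)) - P * (T * P) * star (P * (T * P))
        - P * ((star T * T - T * star T) * P) := by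
    rw [hstB, hstA]
    have cert : P * (T * (1 - P)) * ((1 - P) * star T * P)
        - (P * star T * P * (P * (T * P)) - P * (T * P) * (P * star T * P)
          - P * ((star T * T - T * star T) * P))
        = -(P * star T * (P * P - P) * (T * P)) + P * star T * (T * P - P * T * P)
          + 2 * (P * T * (P * P - P) * (star T * P)) := by noncomm_ring
    rw [hG, hE] at cert
    simp only [mul_zero, zero_mul, add_zero, zero_add, neg_zero] at cert
    exact sub_eq_zero.mp cert
  -- key algebraic identity 2 : [D*, D] = (1-P)[T*,T](1-P) - B* B
  have key2 : star ((1 - P) * (T * (1 - P))) * ((1 - P) * (T * (1 - P)))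
        - (1 - P) * (T * (1 - P)) * star ((1 - P) * (T * (1 - P)))
      = (1 - P) * ((star T * T - T * star T) * (1 - P))
        - star (P * (T * (1 - P))) * (P * (T * (1 - P))) := by
    rw [hstD, hstB]
    have cert : (1 - P) * star T * (1 - P) * ((1 - P) * (T * (1 - P)))
        - (1 - P) * (T * (1 - P)) * ((1 - P) * star T * (1 - P))
        - ((1 - P) * ((star T * T - T * star T) * (1 - P))
          - (1 - P) * star T * P * (P * (T * (1 - P))))
        = -(2 * (P * star T * (P * P - P) * T)) + 2 * (P * star T * (P * P - P) * (T * P))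
          + P * T * (P * P - P) * star T - P * T * (P * P - P) * (star T * P)
          - P * T * (P * star T - P * star T * P)
          + 2 * (star T * (P * P - P) * T) - 2 * (star T * (P * P - P) * (T * P))
          - T * (P * P - P) * star T + T * (P * P - P) * (star T * P)
          + (T * P - P * T * P) * star T
          + P * T * (P * star T - P * star T * P)
          - (T * P - P * T * P) * (star T * P) := by noncomm_ring
    rw [hG, hE, hF] at cert
    simp only [mul_zero, zero_mul, add_zero, zero_add, neg_zero, sub_zero] at cert
    exact sub_eq_zero.mp cert
  -- compactness of compressions of [T*, T]
  have hconj : ∀ R S : H →L[ℂ] H,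
      IsCompactOperator ⇑(R * ((star T * T - T * star T) * S)) := by
    intro R S
    have h1 : IsCompactOperator (⇑(star T * T - T * star T) ∘ ⇑S) := hT.comp_clm S
    have h2 := h1.clm_comp R
    simpa only [ContinuousLinearMap.mul_def, ContinuousLinearMap.coe_comp'] using h2
  -- conclusion 1 : B B* is compact
  have hc1 : IsCompactOperator ⇑(P * (T * (1 - P)) * star (P * (T * (1 - P)))) := by
    rw [key1, ContinuousLinearMap.coe_sub']
    exact hAc.sub (hconj P P)
  -- conclusion 2 : B* B is compact
  have hsBc : IsCompactOperator ⇑(star (P * (T * (1 - P)))) :=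
    isCompactOperator_of_sq_le _ _ (norm_star_apply_sq_le _) hc1
  have hc2 : IsCompactOperator ⇑(star (P * (T * (1 - P))) * (P * (T * (1 - P)))) := by
    have h2 := hsBc.comp_clm (P * (T * (1 - P)))
    simpa only [ContinuousLinearMap.mul_def, ContinuousLinearMap.coe_comp'] using h2
  -- conclusion 3 : [D*, D] is compact
  have hc3 : IsCompactOperator ⇑(star ((1 - P) * (T * (1 - P))) * ((1 - P) * (T * (1 - P)))
      - (1 - P) * (T * (1 - P)) * star ((1 - P) * (T * (1 - P)))) := by
    rw [key2, ContinuousLinearMap.coe_sub']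
    exact (hconj (1 - P) (1 - P)).sub hc2
  exact ⟨hc1, hc2, hc3⟩
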